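/- Let A be an m × p real matrix, x ∈ {0,1}^p with k ones, and Y = A(x)·G + N where G is any random vector. If conditionally on each value, Y given X = x is Gaussian with covariance A(x)A(x)ᵀ, then I(X; Y) ≤ (m/2)·log₂(k · max_i ‖A(i)‖²) − (1/2)·min_{x ∈ 𝒳_k^p} log₂ det(A(x)A(x)ᵀ), provided every such A(x)A(x)ᵀ is nonsingular. -/

import Mathlib

open Finset Matrix MeasureTheory

variable {m k p : ℕ}

/-- The support sets of the 0-1 vectors with exactly `k` ones: `𝒳_k^p`. -/
def Supp (p k : ℕ) := {s : Finset (Fin p) // s.card = k}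

instance : Fintype (Supp p k) := by unfold Supp; infer_instance

/-- `A(x)·A(x)ᵀ`, where `A(x)` is the submatrix of the columns indexed by the
support `s` of `x`. -/
noncomputable def Sig (A : Matrix (Fin m) (Fin p) ℝ) (s : Supp p k) :
    Matrix (Fin m) (Fin m) ℝ :=
  Matrix.of fun i j => ∑ l ∈ s.1, A i l * A j l

/-- Density of the centered Gaussian `N(0, A(x)A(x)ᵀ)` on `ℝ^m`. -/
noncomputable def gpdf (A : Matrix (Fin m) (Fin p) ℝ) (s : Supp p k)
    (y : Fin m → ℝ) : ℝ :=
  (Real.sqrt ((2 * Real.pi) ^ m * (Sig A s).det))⁻¹ *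
    Real.exp (-(∑ i, ∑ j, y i * (Sig A s)⁻¹ i j * y j) / 2)

/-- Density of `Y` when `X ~ q` on `𝒳_k^p` and `Y | X = x  ~  N(0, A(x)A(x)ᵀ)`. -/
noncomputable def fmix (A : Matrix (Fin m) (Fin p) ℝ) (q : Supp p k → ℝ)
    (y : Fin m → ℝ) : ℝ :=
  ∑ s : Supp p k, q s * gpdf A s y

/-- `I(X; Y) = h(Y) − h(Y|X)`, with
`h(Y|X) = ∑ₓ q(x) · (1/2) log₂((2πe)^m det(A(x)A(x)ᵀ))`. -/
noncomputable def mutInf (A : Matrix (Fin m) (Fin p) ℝ) (q : Supp p k → ℝ) : ℝ :=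
  (-∫ y : Fin m → ℝ, fmix A q y * Real.logb 2 (fmix A q y)) -
    ∑ s : Supp p k, q s *
      ((1 / 2) * Real.logb 2 ((2 * Real.pi * Real.exp 1) ^ m * (Sig A s).det))

/-! ### Auxiliary 1-D Gaussian lemmas -/

section OneDim
open Real Set Filter

lemma integrable_sq_gauss : Integrable (fun x : ℝ => x ^ 2 * Real.exp (-x ^ 2 / 2)) := by
  have h4 : Integrable (fun x : ℝ => 4 * Real.exp (-(4:ℝ)⁻¹ * x ^ 2)) :=
    (integrable_exp_neg_mul_sq (by norm_num)).const_mul 4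
  refine h4.mono' ?_ ?_
  · exact ((continuous_pow 2).mul (Real.continuous_exp.comp (by continuity))).aestronglyMeasurable
  · refine Filter.Eventually.of_forall fun x => ?_
    have h2 : x ^ 2 ≤ 4 * Real.exp (x ^ 2 / 4) := by
      nlinarith [Real.add_one_le_exp (x ^ 2 / 4), Real.exp_pos (x ^ 2 / 4)]
    have h3 : 0 < Real.exp (-x ^ 2 / 2) := Real.exp_pos _
    rw [Real.norm_eq_abs, abs_of_nonneg (by positivity)]
    calc x ^ 2 * Real.exp (-x ^ 2 / 2) ≤ (4 * Real.exp (x ^ 2 / 4)) * Real.exp (-x ^ 2 / 2) :=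
          mul_le_mul_of_nonneg_right h2 h3.le
      _ = 4 * Real.exp (-(4:ℝ)⁻¹ * x ^ 2) := by rw [mul_assoc, ← Real.exp_add]; ring_nf

lemma integrable_gauss : Integrable (fun x : ℝ => Real.exp (-x ^ 2 / 2)) := by
  have := integrable_exp_neg_mul_sq (b := (1/2 : ℝ)) (by norm_num)
  simpa [neg_mul, neg_div, mul_comm, div_eq_mul_inv, mul_assoc, mul_left_comm] using
    this.congr (Filter.Eventually.of_forall fun x => by ring_nf)

lemma integral_gauss_line : ∫ x : ℝ, Real.exp (-x ^ 2 / 2) = Real.sqrt (2 * Real.pi) := by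
  have := integral_gaussian (1/2 : ℝ)
  have h : (fun x : ℝ => Real.exp (-x ^ 2 / 2)) = fun x : ℝ => Real.exp (-(1/2) * x ^ 2) := by
    funext x; ring_nf
  rw [h, this]
  norm_num [mul_comm]

lemma hasDeriv_aux (x : ℝ) : HasDerivAt (fun t : ℝ => -t * Real.exp (-t ^ 2 / 2))
    ((x ^ 2 - 1) * Real.exp (-x ^ 2 / 2)) x := by
  have h1 : HasDerivAt (fun t : ℝ => -t ^ 2 / 2) (-x) x := by
    have := ((hasDerivAt_pow 2 x).neg).div_const 2
    refine this.congr_deriv ?_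
    simp; ring
  have h2 : HasDerivAt (fun t : ℝ => Real.exp (-t ^ 2 / 2)) (Real.exp (-x ^ 2 / 2) * (-x)) x :=
    h1.exp
  have h3 : HasDerivAt (fun t : ℝ => -t) (-1 : ℝ) x := (hasDerivAt_id x).neg
  have := h3.mul h2
  refine this.congr_deriv ?_
  ring

lemma hioi : ∫ x in Ioi (0:ℝ), (x ^ 2 - 1) * Real.exp (-x ^ 2 / 2) = 0 := by
  have hcont : ContinuousWithinAt (fun t : ℝ => -t * Real.exp (-t ^ 2 / 2)) (Ici 0) 0 :=
    ((continuous_neg.mul (Real.continuous_exp.comp (by continuity))).continuousWithinAt)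
  have hint : IntegrableOn (fun x : ℝ => (x ^ 2 - 1) * Real.exp (-x ^ 2 / 2)) (Ioi 0) := by
    have : Integrable (fun x : ℝ => (x ^ 2 - 1) * Real.exp (-x ^ 2 / 2)) := by
      have := integrable_sq_gauss.sub integrable_gauss
      simpa [sub_mul, Pi.sub_def] using this
    exact this.integrableOn
  have htend : Tendsto (fun t : ℝ => -t * Real.exp (-t ^ 2 / 2)) atTop (nhds 0) := by
    have h := rpow_mul_exp_neg_mul_sq_isLittleO_exp_neg (b := (1/2:ℝ)) (by norm_num) 1
    have h2 : (fun t : ℝ => -t * Real.exp (-t ^ 2 / 2)) =ᶠ[atTop]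
        fun x : ℝ => -(x ^ (1:ℝ) * Real.exp (-(1/2) * x ^ 2)) := by
      filter_upwards [eventually_gt_atTop (0:ℝ)] with x hx
      rw [Real.rpow_one]; ring_nf
    rw [tendsto_congr' h2]
    have hmul : Tendsto (fun x : ℝ => (1/2 : ℝ) * x) atTop atTop :=
      Tendsto.const_mul_atTop (by norm_num) tendsto_id
    have hexp : Tendsto (fun x : ℝ => Real.exp (-(1/2) * x)) atTop (nhds 0) := by
      have := Real.tendsto_exp_neg_atTop_nhds_zero.comp hmul
      simpa [Function.comp_def, neg_mul] using this
    have h3 : Tendsto (fun x : ℝ => x ^ (1:ℝ) * Real.exp (-(1/2) * x ^ 2)) atTop (nhds 0) :=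
      h.isBigO.trans_tendsto hexp
    simpa using h3.neg
  have := integral_Ioi_of_hasDerivAt_of_tendsto hcont (fun x _ => hasDeriv_aux x) hint htend
  simpa using this

lemma integral_sq_gauss : ∫ x : ℝ, x ^ 2 * Real.exp (-x ^ 2 / 2) = Real.sqrt (2 * Real.pi) := by
  have hsplit : ∫ x in Ioi (0:ℝ), (x ^ 2 - 1) * Real.exp (-x ^ 2 / 2)
      = (∫ x in Ioi (0:ℝ), x ^ 2 * Real.exp (-x ^ 2 / 2))
        - ∫ x in Ioi (0:ℝ), Real.exp (-x ^ 2 / 2) := by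
    rw [← integral_sub (integrable_sq_gauss.integrableOn) (integrable_gauss.integrableOn)]
    congr 1; funext x; ring
  have h1 : ∫ x in Ioi (0:ℝ), x ^ 2 * Real.exp (-x ^ 2 / 2)
      = ∫ x in Ioi (0:ℝ), Real.exp (-x ^ 2 / 2) := by
    have := hioi; rw [hsplit] at this; linarith
  have habs2 : ∫ x : ℝ, x ^ 2 * Real.exp (-x ^ 2 / 2)
      = 2 * ∫ x in Ioi (0:ℝ), x ^ 2 * Real.exp (-x ^ 2 / 2) := by
    have := integral_comp_abs (f := fun t : ℝ => t ^ 2 * Real.exp (-t ^ 2 / 2))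
    rw [← this]
    congr 1; funext x; rw [sq_abs]
  have habs1 : ∫ x : ℝ, Real.exp (-x ^ 2 / 2)
      = 2 * ∫ x in Ioi (0:ℝ), Real.exp (-x ^ 2 / 2) := by
    have := integral_comp_abs (f := fun t : ℝ => Real.exp (-t ^ 2 / 2))
    rw [← this]
    congr 1; funext x; rw [sq_abs]
  rw [habs2, h1, ← habs1, integral_gauss_line]

lemma sqrt_pow' (x : ℝ) (hx : 0 ≤ x) (n : ℕ) : Real.sqrt (x ^ n) = Real.sqrt x ^ n := by
  have h : (Real.sqrt x ^ n) ^ 2 = x ^ n := by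
    rw [← pow_mul, mul_comm, pow_mul, Real.sq_sqrt hx]
  rw [← h, Real.sqrt_sq (pow_nonneg (Real.sqrt_nonneg x) n)]

end OneDim

/-! ### Change of variables -/

lemma map_mulVec_volume (M : Matrix (Fin m) (Fin m) ℝ) (hM : M.det ≠ 0) :
    Measure.map (Matrix.toLin' M) (volume : Measure (Fin m → ℝ))
      = ENNReal.ofReal |M.det|⁻¹ • volume := by
  have h : LinearMap.det (Matrix.toLin' M) = M.det := LinearMap.det_toLin' M
  rw [Real.map_linearMap_volume_pi_eq_smul_volume_pi (by rw [h]; exact hM), h, abs_inv]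

lemma integral_mulVec_comp (M : Matrix (Fin m) (Fin m) ℝ) (hM : M.det ≠ 0)
    (f : (Fin m → ℝ) → ℝ) (hf : Continuous f) :
    ∫ y : Fin m → ℝ, f y = |M.det| * ∫ u : Fin m → ℝ, f (M.mulVec u) := by
  have hmeas : Measurable (Matrix.toLin' M) :=
    (LinearMap.continuous_of_finiteDimensional _).measurable
  have h1 : ∫ y, f y ∂(Measure.map (Matrix.toLin' M) volume)
      = ∫ u : Fin m → ℝ, f (M.mulVec u) := by
    rw [integral_map hmeas.aemeasurable hf.aestronglyMeasurable]
    simp [Matrix.toLin'_apply]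
  rw [map_mulVec_volume M hM, integral_smul_measure] at h1
  have habs : (0:ℝ) < |M.det| := abs_pos.mpr hM
  rw [ENNReal.toReal_ofReal (by positivity)] at h1
  rw [smul_eq_mul] at h1
  field_simp at h1 ⊢
  linarith [h1]

lemma integrable_mulVec_comp_iff (M : Matrix (Fin m) (Fin m) ℝ) (hM : M.det ≠ 0)
    (f : (Fin m → ℝ) → ℝ) (hf : Continuous f) :
    Integrable (fun u : Fin m → ℝ => f (M.mulVec u)) ↔ Integrable f := by
  have hmeas : Measurable (Matrix.toLin' M) :=
    (LinearMap.continuous_of_finiteDimensional _).measurable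
  have h1 : Integrable f (Measure.map (Matrix.toLin' M) volume)
      ↔ Integrable (fun u : Fin m → ℝ => f (M.mulVec u)) := by
    rw [integrable_map_measure hf.aestronglyMeasurable hmeas.aemeasurable]
    simp [Function.comp_def, Matrix.toLin'_apply]
  rw [← h1, map_mulVec_volume M hM]
  have habs : (0:ℝ) < |M.det| := abs_pos.mpr hM
  rw [integrable_smul_measure (by simp [habs.le, habs.ne']; positivity) ENNReal.ofReal_ne_top]

/-! ### Pi-space Gaussian integrals -/

lemma pi_exp_prod (u : Fin m → ℝ) :
    Real.exp (-(∑ a, u a ^ 2) / 2) = ∏ a, Real.exp (-(u a) ^ 2 / 2) := by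
  rw [← Real.exp_sum]
  congr 1
  rw [← Finset.sum_div, ← Finset.sum_neg_distrib]

lemma integrable_pi_gauss :
    Integrable (fun u : Fin m → ℝ => Real.exp (-(∑ a, u a ^ 2) / 2)) := by
  simp_rw [pi_exp_prod]
  exact Integrable.fintype_prod (f := fun (_ : Fin m) (x : ℝ) => Real.exp (-x ^ 2 / 2))
    (fun _ => integrable_gauss)

lemma integral_pi_gauss :
    ∫ u : Fin m → ℝ, Real.exp (-(∑ a, u a ^ 2) / 2) = Real.sqrt (2 * Real.pi) ^ m := by
  simp_rw [pi_exp_prod]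
  rw [MeasureTheory.volume_pi, MeasureTheory.integral_fintype_prod_eq_pow (ι := Fin m) (fun x : ℝ => Real.exp (-x ^ 2 / 2)),
    integral_gauss_line]
  simp

lemma sq_prod_eq (a : Fin m) (u : Fin m → ℝ) :
    Real.exp (-(∑ b, u b ^ 2) / 2) * u a ^ 2
      = ∏ i, ((if i = a then (u i) ^ 2 else 1) * Real.exp (-(u i) ^ 2 / 2)) := by
  rw [Finset.prod_mul_distrib, Finset.prod_ite_eq' Finset.univ a (fun i => (u i) ^ 2),
    if_pos (Finset.mem_univ a), ← pi_exp_prod, mul_comm]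

lemma integrable_pi_gauss_sq (a : Fin m) :
    Integrable (fun u : Fin m → ℝ => Real.exp (-(∑ b, u b ^ 2) / 2) * u a ^ 2) := by
  simp_rw [sq_prod_eq]
  refine Integrable.fintype_prod
    (f := fun (i : Fin m) (x : ℝ) => (if i = a then x ^ 2 else 1) * Real.exp (-x ^ 2 / 2))
    (fun i => ?_)
  by_cases h : i = a <;> simp [h, integrable_sq_gauss, integrable_gauss]

lemma integral_pi_gauss_sq (a : Fin m) :
    ∫ u : Fin m → ℝ, Real.exp (-(∑ b, u b ^ 2) / 2) * u a ^ 2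
      = Real.sqrt (2 * Real.pi) ^ m := by
  simp_rw [sq_prod_eq]
  rw [MeasureTheory.volume_pi, MeasureTheory.integral_fintype_prod_eq_prod (ι := Fin m)
    (fun (i : Fin m) (x : ℝ) => (if i = a then x ^ 2 else 1) * Real.exp (-x ^ 2 / 2))]
  have h : ∀ i : Fin m, (∫ x : ℝ, (if i = a then x ^ 2 else 1) * Real.exp (-x ^ 2 / 2))
      = Real.sqrt (2 * Real.pi) := by
    intro i
    by_cases h : i = a <;> simp [h, integral_sq_gauss, integral_gauss_line]
  rw [Finset.prod_congr rfl (fun i _ => h i)]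
  simp

/-! ### Matrix square-root facts -/

lemma sig_posSemidef (A : Matrix (Fin m) (Fin p) ℝ) (s : Supp p k) :
    (Sig A s).PosSemidef := by
  classical
  set B : Matrix {x // x ∈ s.1} (Fin m) ℝ := Matrix.of fun l i => A i (l : Fin p) with hB
  have h : Sig A s = Bᴴ * B := by
    ext i j
    simp only [Sig, Matrix.mul_apply, Matrix.conjTranspose_apply, Matrix.of_apply, star_trivial,
      hB]
    rw [← Finset.sum_coe_sort s.1 (fun l => A i l * A j l)]
  rw [h]
  exact Matrix.posSemidef_conjTranspose_mul_self B

open scoped MatrixOrder in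
noncomputable def Rt (A : Matrix (Fin m) (Fin p) ℝ) (s : Supp p k) :
    Matrix (Fin m) (Fin m) ℝ := CFC.sqrt (Sig A s)

section SqrtFacts
open scoped MatrixOrder
variable (A : Matrix (Fin m) (Fin p) ℝ) (s : Supp p k)

lemma Rt_mul_Rt : Rt A s * Rt A s = Sig A s := CFC.sqrt_mul_sqrt_self _ (sig_posSemidef A s).nonneg

lemma Rt_symm : (Rt A s)ᵀ = Rt A s := by
  have := (CFC.sqrt_nonneg (Sig A s)).posSemidef.1
  rw [Matrix.IsHermitian, Matrix.conjTranspose_eq_transpose_of_trivial] at this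
  exact this

lemma Rt_det_sq : (Rt A s).det * (Rt A s).det = (Sig A s).det := by
  rw [← Matrix.det_mul, Rt_mul_Rt]

lemma Rt_det_ne_zero (hdet : (Sig A s).det ≠ 0) : (Rt A s).det ≠ 0 :=
  fun h => hdet (by rw [← Rt_det_sq, h, zero_mul])

lemma Rt_abs_det : |(Rt A s).det| = Real.sqrt ((Sig A s).det) := by
  rw [← Rt_det_sq, ← sq, Real.sqrt_sq_eq_abs]

lemma sig_det_pos (hdet : (Sig A s).det ≠ 0) : 0 < (Sig A s).det := by
  rw [← Rt_det_sq]
  rcases (Rt_det_ne_zero A s hdet).lt_or_gt with h | h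
  · exact mul_pos_of_neg_of_neg h h
  · exact mul_pos h h

lemma quad_id (hdet : (Sig A s).det ≠ 0) (u : Fin m → ℝ) :
    ∑ i, ∑ j, (Rt A s).mulVec u i * (Sig A s)⁻¹ i j * (Rt A s).mulVec u j
      = ∑ a, u a ^ 2 := by
  have h1 : ∀ (y : Fin m → ℝ) (M : Matrix (Fin m) (Fin m) ℝ),
      ∑ i, ∑ j, y i * M i j * y j = y ⬝ᵥ M.mulVec y := by
    intro y M
    simp [dotProduct, Matrix.mulVec, Finset.mul_sum, mul_assoc]
  rw [h1]
  have hR := Rt_det_ne_zero A s hdet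
  have hinv : (Sig A s)⁻¹ = (Rt A s)⁻¹ * (Rt A s)⁻¹ := by
    rw [← Rt_mul_Rt A s, Matrix.mul_inv_rev]
  have key : (Rt A s)ᵀ * (Sig A s)⁻¹ * Rt A s = 1 := by
    rw [Rt_symm, hinv, ← Matrix.mul_assoc, Matrix.mul_assoc (Rt A s * (Rt A s)⁻¹),
      Matrix.nonsing_inv_mul _ hR.isUnit, Matrix.mul_nonsing_inv _ hR.isUnit]
    simp
  rw [Matrix.mulVec_mulVec, ← Matrix.vecMul_transpose, dotProduct_mulVec,
    Matrix.vecMul_vecMul, ← Matrix.mul_assoc, key, Matrix.vecMul_one]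
  simp [dotProduct, sq]

lemma trace_Rt : ∑ i, ∑ a, Rt A s i a ^ 2 = ∑ i, Sig A s i i := by
  have hsym : ∀ i a, Rt A s a i = Rt A s i a := by
    intro i a
    have := congrFun (congrFun (Rt_symm A s) a) i
    simpa [Matrix.transpose_apply] using this.symm
  conv_rhs => rw [← Rt_mul_Rt A s]
  simp only [Matrix.mul_apply]
  refine Finset.sum_congr rfl fun i _ => Finset.sum_congr rfl fun a _ => ?_
  rw [hsym i a, sq]

end SqrtFacts

/-! ### Per-`s` density facts -/

section Gpdf
variable (A : Matrix (Fin m) (Fin p) ℝ) (s : Supp p k)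

noncomputable def csig : ℝ := (Real.sqrt ((2 * Real.pi) ^ m * (Sig A s).det))⁻¹

lemma csig_nonneg : 0 ≤ csig A s := inv_nonneg.mpr (Real.sqrt_nonneg _)

lemma gpdf_eq (y : Fin m → ℝ) :
    gpdf A s y = csig A s * Real.exp (-(∑ i, ∑ j, y i * (Sig A s)⁻¹ i j * y j) / 2) := rfl

lemma gpdf_nonneg (y : Fin m → ℝ) : 0 ≤ gpdf A s y :=
  mul_nonneg (csig_nonneg A s) (Real.exp_pos _).le

lemma continuous_quad (M : Matrix (Fin m) (Fin m) ℝ) :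
    Continuous (fun y : Fin m → ℝ => ∑ i, ∑ j, y i * M i j * y j) :=
  continuous_finset_sum _ fun i _ => continuous_finset_sum _ fun j _ =>
    (((continuous_apply i).mul continuous_const).mul (continuous_apply j))

lemma continuous_gpdf : Continuous (gpdf A s) := by
  unfold gpdf
  exact continuous_const.mul
    (Real.continuous_exp.comp ((continuous_quad (Sig A s)⁻¹).neg.div_const 2))

lemma continuous_sumsq : Continuous (fun y : Fin m → ℝ => ∑ i, y i ^ 2) :=
  continuous_finset_sum _ fun i _ => (continuous_apply i).pow 2

lemma csig_detR (hdet : (Sig A s).det ≠ 0) :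
    |(Rt A s).det| * csig A s = (Real.sqrt (2 * Real.pi) ^ m)⁻¹ := by
  have hpos := sig_det_pos A s hdet
  have h2π : (0:ℝ) ≤ 2 * Real.pi := by positivity
  rw [Rt_abs_det, csig, Real.sqrt_mul (pow_nonneg h2π m), sqrt_pow' _ h2π]
  have hd : Real.sqrt ((Sig A s).det) ≠ 0 := by positivity
  have hsq : Real.sqrt (2 * Real.pi) ≠ 0 := by positivity
  field_simp

lemma gpdf_comp (hdet : (Sig A s).det ≠ 0) (u : Fin m → ℝ) :
    gpdf A s ((Rt A s).mulVec u) = csig A s * Real.exp (-(∑ a, u a ^ 2) / 2) := by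
  rw [gpdf_eq, quad_id A s hdet]

lemma integrable_gpdf (hdet : (Sig A s).det ≠ 0) : Integrable (gpdf A s) := by
  rw [← integrable_mulVec_comp_iff (Rt A s) (Rt_det_ne_zero A s hdet) _ (continuous_gpdf A s)]
  simp_rw [gpdf_comp A s hdet]
  exact integrable_pi_gauss.const_mul _

lemma integral_gpdf (hdet : (Sig A s).det ≠ 0) : ∫ y : Fin m → ℝ, gpdf A s y = 1 := by
  rw [integral_mulVec_comp (Rt A s) (Rt_det_ne_zero A s hdet) _ (continuous_gpdf A s)]
  simp_rw [gpdf_comp A s hdet]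
  rw [MeasureTheory.integral_const_mul, integral_pi_gauss, ← mul_assoc, csig_detR A s hdet]
  have hsq : (0:ℝ) < Real.sqrt (2 * Real.pi) := Real.sqrt_pos.mpr (by positivity)
  field_simp

lemma cauchy_bound (u : Fin m → ℝ) :
    ∑ i, ((Rt A s).mulVec u i) ^ 2 ≤ (∑ i, Sig A s i i) * ∑ a, u a ^ 2 := by
  rw [← trace_Rt A s, Finset.sum_mul]
  refine Finset.sum_le_sum fun i _ => ?_
  exact Finset.sum_mul_sq_le_sq_mul_sq Finset.univ (fun a => Rt A s i a) u

lemma trace_nonneg : 0 ≤ ∑ i, Sig A s i i := by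
  rw [← trace_Rt A s]
  positivity

lemma continuous_mulVec_coord (i : Fin m) :
    Continuous fun u : Fin m → ℝ => (Rt A s).mulVec u i := by
  have h : (fun u : Fin m → ℝ => (Rt A s).mulVec u i)
      = fun u => ∑ a, Rt A s i a * u a := rfl
  rw [h]
  exact continuous_finset_sum _ fun a _ => continuous_const.mul (continuous_apply a)

lemma integrable_gpdf_sq (hdet : (Sig A s).det ≠ 0) :
    Integrable (fun y : Fin m → ℝ => gpdf A s y * ∑ i, y i ^ 2) := by
  rw [← integrable_mulVec_comp_iff (Rt A s) (Rt_det_ne_zero A s hdet)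
    (fun y => gpdf A s y * ∑ i, y i ^ 2) ((continuous_gpdf A s).mul (continuous_sumsq))]
  have hcont : Continuous (fun u : Fin m → ℝ =>
      gpdf A s ((Rt A s).mulVec u) * ∑ i, ((Rt A s).mulVec u i) ^ 2) := by
    refine Continuous.mul ?_ ?_
    · exact (continuous_gpdf A s).comp
        (continuous_pi fun i => continuous_mulVec_coord A s i)
    · exact continuous_finset_sum _ fun i _ => (continuous_mulVec_coord A s i).pow 2
  refine Integrable.mono'
    ((MeasureTheory.integrable_finset_sum (Finset.univ : Finset (Fin m))
        (fun a _ => integrable_pi_gauss_sq a)).const_mul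
      (csig A s * ∑ i, Sig A s i i))
    hcont.aestronglyMeasurable (Filter.Eventually.of_forall fun u => ?_)
  rw [Real.norm_eq_abs, abs_of_nonneg (mul_nonneg (gpdf_nonneg A s _)
    (Finset.sum_nonneg fun i _ => sq_nonneg _))]
  rw [gpdf_comp A s hdet]
  have h1 := cauchy_bound A s u
  have h2 : (0:ℝ) ≤ csig A s * Real.exp (-(∑ a, u a ^ 2) / 2) :=
    mul_nonneg (csig_nonneg A s) (Real.exp_pos _).le
  calc csig A s * Real.exp (-(∑ a, u a ^ 2) / 2) * ∑ i, ((Rt A s).mulVec u i) ^ 2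
      ≤ csig A s * Real.exp (-(∑ a, u a ^ 2) / 2) * ((∑ i, Sig A s i i) * ∑ a, u a ^ 2) :=
        mul_le_mul_of_nonneg_left h1 h2
    _ = csig A s * (∑ i, Sig A s i i) *
        (∑ a, Real.exp (-(∑ b, u b ^ 2) / 2) * u a ^ 2) := by
        rw [← Finset.mul_sum]; ring

lemma integral_gpdf_sq_le (hdet : (Sig A s).det ≠ 0) :
    ∫ y : Fin m → ℝ, gpdf A s y * ∑ i, y i ^ 2 ≤ (m : ℝ) * ∑ i, Sig A s i i := by
  rw [integral_mulVec_comp (Rt A s) (Rt_det_ne_zero A s hdet)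
    (fun y => gpdf A s y * ∑ i, y i ^ 2) ((continuous_gpdf A s).mul (continuous_sumsq))]
  have hIu : Integrable (fun u : Fin m → ℝ =>
      gpdf A s ((Rt A s).mulVec u) * ∑ i, ((Rt A s).mulVec u i) ^ 2) :=
    (integrable_mulVec_comp_iff (Rt A s) (Rt_det_ne_zero A s hdet) _
      ((continuous_gpdf A s).mul (continuous_sumsq))).mpr (integrable_gpdf_sq A s hdet)
  have hRHSint : Integrable (fun u : Fin m → ℝ =>
      csig A s * (∑ i, Sig A s i i) * ∑ a, Real.exp (-(∑ b, u b ^ 2) / 2) * u a ^ 2) :=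
    (MeasureTheory.integrable_finset_sum (Finset.univ : Finset (Fin m))
        (fun a _ => integrable_pi_gauss_sq a)).const_mul _
  have hmono : ∫ u : Fin m → ℝ, gpdf A s ((Rt A s).mulVec u) * ∑ i, ((Rt A s).mulVec u i) ^ 2
      ≤ ∫ u : Fin m → ℝ,
        csig A s * (∑ i, Sig A s i i) * ∑ a, Real.exp (-(∑ b, u b ^ 2) / 2) * u a ^ 2 := by
    refine integral_mono hIu hRHSint fun u => ?_
    rw [gpdf_comp A s hdet]
    have h1 := cauchy_bound A s u
    have h2 : (0:ℝ) ≤ csig A s * Real.exp (-(∑ a, u a ^ 2) / 2) :=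
      mul_nonneg (csig_nonneg A s) (Real.exp_pos _).le
    calc csig A s * Real.exp (-(∑ a, u a ^ 2) / 2) * ∑ i, ((Rt A s).mulVec u i) ^ 2
        ≤ csig A s * Real.exp (-(∑ a, u a ^ 2) / 2) * ((∑ i, Sig A s i i) * ∑ a, u a ^ 2) :=
          mul_le_mul_of_nonneg_left h1 h2
      _ = csig A s * (∑ i, Sig A s i i) *
          (∑ a, Real.exp (-(∑ b, u b ^ 2) / 2) * u a ^ 2) := by
          rw [← Finset.mul_sum]; ring
  have hRHSval : ∫ u : Fin m → ℝ,
      csig A s * (∑ i, Sig A s i i) * ∑ a, Real.exp (-(∑ b, u b ^ 2) / 2) * u a ^ 2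
      = csig A s * (∑ i, Sig A s i i) * ((m : ℝ) * Real.sqrt (2 * Real.pi) ^ m) := by
    rw [MeasureTheory.integral_const_mul, MeasureTheory.integral_finset_sum _
      (fun a _ => integrable_pi_gauss_sq a)]
    congr 1
    rw [Finset.sum_congr rfl (fun a _ => integral_pi_gauss_sq a)]
    simp [mul_comm]
  calc |(Rt A s).det| * ∫ u : Fin m → ℝ,
        gpdf A s ((Rt A s).mulVec u) * ∑ i, ((Rt A s).mulVec u i) ^ 2
      ≤ |(Rt A s).det| * (csig A s * (∑ i, Sig A s i i) *
          ((m : ℝ) * Real.sqrt (2 * Real.pi) ^ m)) := by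
        rw [← hRHSval]
        exact mul_le_mul_of_nonneg_left hmono (abs_nonneg _)
    _ = (|(Rt A s).det| * csig A s * Real.sqrt (2 * Real.pi) ^ m)
          * ((m : ℝ) * ∑ i, Sig A s i i) := by ring
    _ = (m : ℝ) * ∑ i, Sig A s i i := by
        rw [csig_detR A s hdet]
        have hsq : (0:ℝ) < Real.sqrt (2 * Real.pi) := Real.sqrt_pos.mpr (by positivity)
        rw [inv_mul_cancel₀ (by positivity), one_mul]

end Gpdf

/-! ### The reference isotropic Gaussian -/

section Ref

noncomputable def gref (m : ℕ) (v : ℝ) : (Fin m → ℝ) → ℝ := fun y =>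
  ((Real.sqrt (2 * Real.pi * v))⁻¹) ^ m * Real.exp (-(∑ i, y i ^ 2) / (2 * v))

variable {v : ℝ}

lemma cref_pos (hv : 0 < v) : 0 < (Real.sqrt (2 * Real.pi * v))⁻¹ := by
  have : (0:ℝ) < 2 * Real.pi * v := by positivity
  positivity

lemma gref_pos (hv : 0 < v) (y : Fin m → ℝ) : 0 < gref m v y :=
  mul_pos (pow_pos (cref_pos hv) m) (Real.exp_pos _)

lemma continuous_gref : Continuous (gref m v) :=
  continuous_const.mul (Real.continuous_exp.comp
    ((continuous_finset_sum _ fun i _ => (continuous_apply i).pow 2).neg.div_const _))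

lemma gref_comp (hv : 0 < v) (u : Fin m → ℝ) :
    gref m v ((Matrix.diagonal (fun _ : Fin m => Real.sqrt v)).mulVec u)
      = ((Real.sqrt (2 * Real.pi * v))⁻¹) ^ m * Real.exp (-(∑ a, u a ^ 2) / 2) := by
  unfold gref
  congr 2
  have h : ∀ i, (Matrix.diagonal (fun _ : Fin m => Real.sqrt v)).mulVec u i
      = Real.sqrt v * u i := fun i => Matrix.mulVec_diagonal _ _ _
  have h2 : ∑ i, ((Matrix.diagonal (fun _ : Fin m => Real.sqrt v)).mulVec u i) ^ 2
      = v * ∑ a, u a ^ 2 := by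
    rw [Finset.mul_sum]
    refine Finset.sum_congr rfl fun i _ => ?_
    rw [h i, mul_pow, Real.sq_sqrt hv.le]
  rw [h2]
  field_simp

lemma det_diag_sqrt (hv : 0 < v) :
    (Matrix.diagonal (fun _ : Fin m => Real.sqrt v)).det = Real.sqrt v ^ m := by
  rw [Matrix.det_diagonal]
  simp

lemma integrable_gref (hv : 0 < v) : Integrable (gref m v) := by
  have hdet : (Matrix.diagonal (fun _ : Fin m => Real.sqrt v)).det ≠ 0 := by
    rw [det_diag_sqrt hv]
    positivity
  rw [← integrable_mulVec_comp_iff _ hdet _ continuous_gref]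
  simp_rw [gref_comp hv]
  exact integrable_pi_gauss.const_mul _

lemma integral_gref (hv : 0 < v) : ∫ y : Fin m → ℝ, gref m v y = 1 := by
  have hdet : (Matrix.diagonal (fun _ : Fin m => Real.sqrt v)).det ≠ 0 := by
    rw [det_diag_sqrt hv]
    positivity
  rw [integral_mulVec_comp _ hdet _ continuous_gref]
  simp_rw [gref_comp hv]
  rw [MeasureTheory.integral_const_mul, integral_pi_gauss, det_diag_sqrt hv,
    abs_of_nonneg (by positivity)]
  rw [Real.sqrt_mul (by positivity : (0:ℝ) ≤ 2 * Real.pi) v]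
  have h1 : (0:ℝ) < Real.sqrt (2 * Real.pi) := Real.sqrt_pos.mpr (by positivity)
  have h2 : (0:ℝ) < Real.sqrt v := Real.sqrt_pos.mpr hv
  rw [← mul_assoc, ← mul_pow, ← mul_pow, mul_inv, ← mul_assoc]
  have h3 : Real.sqrt v * (Real.sqrt (2 * Real.pi))⁻¹ * (Real.sqrt v)⁻¹ * Real.sqrt (2 * Real.pi)
      = 1 := by field_simp
  rw [h3, one_pow]

lemma log_gref (hv : 0 < v) (y : Fin m → ℝ) :
    Real.log (gref m v y)
      = (m : ℝ) * Real.log ((Real.sqrt (2 * Real.pi * v))⁻¹) - (∑ i, y i ^ 2) / (2 * v) := by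
  unfold gref
  rw [Real.log_mul (pow_ne_zero _ (cref_pos hv).ne') (Real.exp_ne_zero _), Real.log_pow,
    Real.log_exp]
  ring

end Ref

/-! ### Mixture facts -/

section Mix
variable (A : Matrix (Fin m) (Fin p) ℝ) (q : Supp p k → ℝ)

lemma continuous_fmix : Continuous (fmix A q) := by
  unfold fmix
  exact continuous_finset_sum _ fun s _ => continuous_const.mul (continuous_gpdf A s)

lemma fmix_nonneg (hq0 : ∀ s, 0 ≤ q s) (y : Fin m → ℝ) : 0 ≤ fmix A q y :=
  Finset.sum_nonneg fun s _ => mul_nonneg (hq0 s) (gpdf_nonneg A s y)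

lemma integrable_fmix (hns : ∀ s : Supp p k, (Sig A s).det ≠ 0) :
    Integrable (fmix A q) := by
  unfold fmix
  exact MeasureTheory.integrable_finset_sum _ fun s _ =>
    (integrable_gpdf A s (hns s)).const_mul (q s)

lemma integral_fmix (hq1 : ∑ s : Supp p k, q s = 1)
    (hns : ∀ s : Supp p k, (Sig A s).det ≠ 0) :
    ∫ y : Fin m → ℝ, fmix A q y = 1 := by
  unfold fmix
  rw [MeasureTheory.integral_finset_sum _ fun s _ =>
    (integrable_gpdf A s (hns s)).const_mul (q s)]
  simp_rw [MeasureTheory.integral_const_mul]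
  rw [Finset.sum_congr rfl fun s _ => by rw [integral_gpdf A s (hns s), mul_one]]
  exact hq1

lemma fmix_mul_sumsq (y : Fin m → ℝ) :
    fmix A q y * ∑ i, y i ^ 2 = ∑ s : Supp p k, q s * (gpdf A s y * ∑ i, y i ^ 2) := by
  unfold fmix
  rw [Finset.sum_mul]
  exact Finset.sum_congr rfl fun s _ => by ring

lemma integrable_fmix_sq (hns : ∀ s : Supp p k, (Sig A s).det ≠ 0) :
    Integrable (fun y : Fin m → ℝ => fmix A q y * ∑ i, y i ^ 2) := by
  simp_rw [fmix_mul_sumsq]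
  exact MeasureTheory.integrable_finset_sum _ fun s _ =>
    (integrable_gpdf_sq A s (hns s)).const_mul (q s)

lemma integral_fmix_sq_le (hq0 : ∀ s, 0 ≤ q s) (hq1 : ∑ s : Supp p k, q s = 1)
    (hns : ∀ s : Supp p k, (Sig A s).det ≠ 0) (C : ℝ)
    (hC : ∀ s : Supp p k, ∑ i, Sig A s i i ≤ C) :
    ∫ y : Fin m → ℝ, fmix A q y * ∑ i, y i ^ 2 ≤ (m : ℝ) * C := by
  simp_rw [fmix_mul_sumsq]
  rw [MeasureTheory.integral_finset_sum _ fun s _ =>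
    (integrable_gpdf_sq A s (hns s)).const_mul (q s)]
  simp_rw [MeasureTheory.integral_const_mul]
  calc ∑ s : Supp p k, q s * ∫ y : Fin m → ℝ, gpdf A s y * ∑ i, y i ^ 2
      ≤ ∑ s : Supp p k, q s * ((m : ℝ) * C) := by
        refine Finset.sum_le_sum fun s _ => mul_le_mul_of_nonneg_left ?_ (hq0 s)
        exact le_trans (integral_gpdf_sq_le A s (hns s))
          (mul_le_mul_of_nonneg_left (hC s) (Nat.cast_nonneg m))
    _ = (m : ℝ) * C := by rw [← Finset.sum_mul, hq1, one_mul]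

end Mix

theorem stmt_9 (hm : 0 < m) (hmk : m ≤ k) (hkp : k ≤ p)
    (A : Matrix (Fin m) (Fin p) ℝ)
    (q : Supp p k → ℝ) (hq0 : ∀ s, 0 ≤ q s) (hq1 : ∑ s : Supp p k, q s = 1)
    (hnonsing : ∀ s : Supp p k, (Sig A s).det ≠ 0)
    (hint : Integrable (fun y : Fin m → ℝ => fmix A q y * Real.logb 2 (fmix A q y))) :
    mutInf A q ≤
      ((m : ℝ) / 2) * Real.logb 2 ((k : ℝ) * ⨆ i : Fin p, ∑ j : Fin m, (A j i) ^ 2)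
        - (1 / 2) * ⨅ s : Supp p k, Real.logb 2 ((Sig A s).det) := by
  classical
  -- nonemptiness
  obtain ⟨t, -, ht⟩ := Finset.exists_subset_card_eq (s := (Finset.univ : Finset (Fin p)))
    (n := k) (by simpa using hkp)
  haveI hne : Nonempty (Supp p k) := ⟨⟨t, ht⟩⟩
  set S : ℝ := ⨆ i : Fin p, ∑ j : Fin m, (A j i) ^ 2 with hSdef
  haveI : Nonempty (Fin p) := ⟨⟨0, lt_of_lt_of_le hm (le_trans hmk hkp)⟩⟩
  have hbdd : BddAbove (Set.range fun i : Fin p => ∑ j : Fin m, (A j i) ^ 2) :=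
    Set.Finite.bddAbove (Set.finite_range _)
  have hSle : ∀ i : Fin p, ∑ j : Fin m, (A j i) ^ 2 ≤ S := fun i => le_ciSup hbdd i
  -- S > 0
  have hS : 0 < S := by
    by_contra hcon
    push_neg at hcon
    have hA0 : ∀ j i, A j i = 0 := by
      intro j i
      have h1 : ∑ j : Fin m, (A j i) ^ 2 ≤ 0 := le_trans (hSle i) hcon
      have h2 : ∀ j ∈ Finset.univ, (0:ℝ) ≤ (A j i) ^ 2 := fun j _ => sq_nonneg _
      have h3 := Finset.sum_nonneg h2
      have h4 : ∑ j : Fin m, (A j i) ^ 2 = 0 := le_antisymm h1 h3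
      have := (Finset.sum_eq_zero_iff_of_nonneg h2).mp h4 j (Finset.mem_univ j)
      exact pow_eq_zero_iff two_ne_zero |>.mp this
    obtain ⟨s0⟩ := hne
    apply hnonsing s0
    have hz : Sig A s0 = 0 := by
      ext i j
      simp [Sig, hA0]
    rw [hz]
    haveI : Nonempty (Fin m) := ⟨⟨0, hm⟩⟩
    exact Matrix.det_zero
  set v : ℝ := (k : ℝ) * S with hvdef
  have hk0 : 0 < (k:ℝ) := by exact_mod_cast lt_of_lt_of_le hm hmk
  have hv : 0 < v := mul_pos hk0 hS
  -- trace bound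
  have htr : ∀ s : Supp p k, ∑ i, Sig A s i i ≤ v := by
    intro s
    have h1 : ∑ i, Sig A s i i = ∑ l ∈ s.1, ∑ i, A i l * A i l := by
      rw [Finset.sum_comm]
      rfl
    rw [h1]
    calc ∑ l ∈ s.1, ∑ i, A i l * A i l ≤ ∑ l ∈ s.1, S := by
          refine Finset.sum_le_sum fun l _ => ?_
          have := hSle l
          simpa [sq] using this
      _ = (k:ℝ) * S := by rw [Finset.sum_const, s.2, nsmul_eq_mul]
  -- Gibbs step (natural logs)
  have hfpos := fmix_nonneg A q hq0
  have hfint := integrable_fmix A q hnonsing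
  have hfix := integral_fmix A q hq1 hnonsing
  have hfsq := integrable_fmix_sq A q hnonsing
  have hfsqle := integral_fmix_sq_le A q hq0 hq1 hnonsing v htr
  have hgint := integrable_gref (m := m) hv
  have hgfix := integral_gref (m := m) hv
  set c' : ℝ := (Real.sqrt (2 * Real.pi * v))⁻¹ with hc'def
  have hc'pos : 0 < c' := cref_pos hv
  -- integrability of fmix * log fmix
  have hlog2pos : (0:ℝ) < Real.log 2 := Real.log_pos one_lt_two
  have hflogf : Integrable (fun y : Fin m → ℝ => fmix A q y * Real.log (fmix A q y)) := by
    have h := hint.mul_const (Real.log 2)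
    refine h.congr (Filter.Eventually.of_forall fun y => ?_)
    have hy : Real.log (fmix A q y) = Real.logb 2 (fmix A q y) * Real.log 2 := by
      rw [← Real.log_div_log, div_mul_cancel₀ _ hlog2pos.ne']
    show fmix A q y * Real.logb 2 (fmix A q y) * Real.log 2
      = fmix A q y * Real.log (fmix A q y)
    rw [hy]
    ring
  -- integrability of fmix * log gref
  have hfg_eq : ∀ y : Fin m → ℝ, fmix A q y * Real.log (gref m v y)
      = ((m:ℝ) * Real.log c') * fmix A q y - (fmix A q y * ∑ i, y i ^ 2) * (2 * v)⁻¹ := by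
    intro y
    rw [log_gref hv y]
    ring
  have hfgint : Integrable (fun y : Fin m → ℝ => fmix A q y * Real.log (gref m v y)) := by
    simp_rw [hfg_eq]
    exact (hfint.const_mul _).sub (hfsq.mul_const _)
  have hfgval : ∫ y : Fin m → ℝ, fmix A q y * Real.log (gref m v y)
      = ((m:ℝ) * Real.log c') - (∫ y : Fin m → ℝ, fmix A q y * ∑ i, y i ^ 2) * (2 * v)⁻¹ := by
    simp_rw [hfg_eq]
    rw [MeasureTheory.integral_sub (hfint.const_mul _) (hfsq.mul_const _),
      MeasureTheory.integral_const_mul, MeasureTheory.integral_mul_const, hfix, mul_one]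
  -- pointwise Gibbs
  have hpt : ∀ y : Fin m → ℝ, fmix A q y * Real.log (gref m v y) + fmix A q y - gref m v y
      ≤ fmix A q y * Real.log (fmix A q y) := by
    intro y
    rcases (hfpos y).eq_or_lt with h | h
    · rw [← h]
      simp [(gref_pos hv y).le]
    · have hg := gref_pos hv y
      have hlog : Real.log (gref m v y / fmix A q y) ≤ gref m v y / fmix A q y - 1 :=
        Real.log_le_sub_one_of_pos (div_pos hg h)
      rw [Real.log_div hg.ne' h.ne'] at hlog
      have hmul := mul_le_mul_of_nonneg_left hlog h.le
      have hdiv : fmix A q y * (gref m v y / fmix A q y) = gref m v y := by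
        field_simp
      nlinarith [hmul, hdiv]
  -- integrate
  have hsum : Integrable (fun y : Fin m → ℝ =>
      fmix A q y * Real.log (gref m v y) + fmix A q y) := hfgint.add hfint
  have hlhs : Integrable (fun y : Fin m → ℝ =>
      fmix A q y * Real.log (gref m v y) + fmix A q y - gref m v y) := hsum.sub hgint
  have hgibbs : ∫ y : Fin m → ℝ, (fmix A q y * Real.log (gref m v y) + fmix A q y - gref m v y)
      ≤ ∫ y : Fin m → ℝ, fmix A q y * Real.log (fmix A q y) :=
    integral_mono hlhs hflogf hpt
  rw [MeasureTheory.integral_sub hsum hgint,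
    MeasureTheory.integral_add hfgint hfint, hfix, hgfix, hfgval] at hgibbs
  -- lower bound on ∫ f log f
  have hkey : (m:ℝ) * Real.log c' - (m:ℝ) / 2
      ≤ ∫ y : Fin m → ℝ, fmix A q y * Real.log (fmix A q y) := by
    have h1 : (∫ y : Fin m → ℝ, fmix A q y * ∑ i, y i ^ 2) * (2 * v)⁻¹
        ≤ ((m:ℝ) * v) * (2 * v)⁻¹ :=
      mul_le_mul_of_nonneg_right hfsqle (by positivity)
    have h2 : ((m:ℝ) * v) * (2 * v)⁻¹ = (m:ℝ) / 2 := by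
      field_simp
    linarith [hgibbs, h1, h2 ▸ h1]
  -- convert to base-2 logs
  set L : ℝ := ⨅ s : Supp p k, Real.logb 2 ((Sig A s).det) with hLdef
  have hE1eq : ∫ y : Fin m → ℝ, fmix A q y * Real.logb 2 (fmix A q y)
      = (∫ y : Fin m → ℝ, fmix A q y * Real.log (fmix A q y)) / Real.log 2 := by
    have hfun : (fun y : Fin m → ℝ => fmix A q y * Real.logb 2 (fmix A q y))
        = fun y => (fmix A q y * Real.log (fmix A q y)) * (Real.log 2)⁻¹ := by
      funext y
      rw [← Real.log_div_log]
      ring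
    rw [hfun, MeasureTheory.integral_mul_const, div_eq_mul_inv]
  have h2π_ne : (2 * Real.pi) ≠ 0 := by positivity
  have hlogc' : Real.log c' = -(Real.log (2 * Real.pi) + Real.log v) / 2 := by
    rw [hc'def, Real.log_inv, Real.log_sqrt (by positivity), Real.log_mul h2π_ne hv.ne']
    ring
  have hlog2πe : Real.log (2 * Real.pi * Real.exp 1) = Real.log (2 * Real.pi) + 1 := by
    rw [Real.log_mul h2π_ne (Real.exp_ne_zero 1), Real.log_exp]
  set IF : ℝ := ∫ y : Fin m → ℝ, fmix A q y * Real.log (fmix A q y) with hIFdef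
  have hnum : -IF ≤ ((m:ℝ) / 2) * Real.log (2 * Real.pi * Real.exp 1)
      + ((m:ℝ) / 2) * Real.log v := by
    rw [hlog2πe]
    rw [hlogc'] at hkey
    linarith [hkey]
  have hA1 : -(IF / Real.log 2)
      ≤ ((m:ℝ) / 2) * Real.logb 2 (2 * Real.pi * Real.exp 1)
        + ((m:ℝ) / 2) * Real.logb 2 v := by
    have hdiv : (-IF) / Real.log 2
        ≤ (((m:ℝ) / 2) * Real.log (2 * Real.pi * Real.exp 1)
            + ((m:ℝ) / 2) * Real.log v) / Real.log 2 :=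
      (div_le_div_iff_of_pos_right hlog2pos).mpr hnum
    rw [neg_div] at hdiv
    refine le_trans hdiv (le_of_eq ?_)
    rw [Real.logb, Real.logb]
    ring
  -- conditional entropy part
  have h2πe_ne : (2 * Real.pi * Real.exp 1) ≠ 0 := by positivity
  have hdetb : ∀ s : Supp p k,
      Real.logb 2 ((2 * Real.pi * Real.exp 1) ^ m * (Sig A s).det)
        = (m:ℝ) * Real.logb 2 (2 * Real.pi * Real.exp 1) + Real.logb 2 ((Sig A s).det) := by
    intro s
    rw [Real.logb_mul (pow_ne_zero _ h2πe_ne) (hnonsing s), Real.logb_pow]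
  have hLle : ∀ s : Supp p k, L ≤ Real.logb 2 ((Sig A s).det) := fun s =>
    ciInf_le (Set.Finite.bddBelow (Set.finite_range _)) s
  have hE2 : ((m:ℝ) / 2) * Real.logb 2 (2 * Real.pi * Real.exp 1) + (1 / 2) * L
      ≤ ∑ s : Supp p k, q s *
          ((1 / 2) * Real.logb 2 ((2 * Real.pi * Real.exp 1) ^ m * (Sig A s).det)) := by
    have hterm : ∀ s : Supp p k,
        q s * ((1 / 2) * (((m:ℝ) * Real.logb 2 (2 * Real.pi * Real.exp 1)) + L))
          ≤ q s * ((1 / 2) * Real.logb 2 ((2 * Real.pi * Real.exp 1) ^ m * (Sig A s).det)) := by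
      intro s
      rw [hdetb s]
      exact mul_le_mul_of_nonneg_left
        (mul_le_mul_of_nonneg_left (add_le_add_right (hLle s) _) (by norm_num)) (hq0 s)
    calc ((m:ℝ) / 2) * Real.logb 2 (2 * Real.pi * Real.exp 1) + (1 / 2) * L
        = ∑ s : Supp p k, q s *
            ((1 / 2) * (((m:ℝ) * Real.logb 2 (2 * Real.pi * Real.exp 1)) + L)) := by
          rw [← Finset.sum_mul, hq1, one_mul]
          ring
      _ ≤ _ := Finset.sum_le_sum fun s _ => hterm s
  -- finish
  unfold mutInf
  rw [hE1eq]
  linarith [hA1, hE2]
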